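/- For every element v of the alternating group A_{n+1}, there exist unique elements v_j in R_j^A for 1 <= j <= n-1 such that v = v_1 v_2 ... v_{n-1}. -/

import Mathlib

open Equiv Finset

namespace SignedEven

/-- Type-B Coxeter generators inside `Equiv.Perm ℤ`:
`s 0` is the sign change in the first position, `s i = (i, i+1)(-i, -(i+1))`. -/
def s (i : ℕ) : Equiv.Perm ℤ :=
  if i = 0 then Equiv.swap 1 (-1)
  else Equiv.swap (i : ℤ) ((i : ℤ) + 1) * Equiv.swap (-(i : ℤ)) (-((i : ℤ) + 1))

/-- Generators of the group of signed even permutations: `a 0 = s 0`, `a i = s 1 * s (i+1)`. -/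
def a (i : ℕ) : Equiv.Perm ℤ := if i = 0 then s 0 else s 1 * s (i + 1)

/-- `σ` is a signed permutation on `{±1, …, ±n}` (an element of `B_n`). -/
def isB (n : ℕ) (σ : Equiv.Perm ℤ) : Prop :=
  (∀ i : ℤ, σ (-i) = -σ i) ∧ ∀ i : ℤ, (n : ℤ) < |i| → σ i = i

/-- `σ` is an (unsigned) permutation of `{1, …, n}` (an element of `S_n ⊆ B_n`). -/
def isS (n : ℕ) (σ : Equiv.Perm ℤ) : Prop := isB n σ ∧ ∀ i : ℤ, 0 < i → 0 < σ i

/-- inversion number of the window `[σ(1), …, σ(n)]`. -/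
noncomputable def invStat (n : ℕ) (σ : Equiv.Perm ℤ) : ℕ :=
  (((Finset.Icc (1 : ℤ) (n : ℤ)) ×ˢ (Finset.Icc (1 : ℤ) (n : ℤ))).filter
    (fun p => p.1 < p.2 ∧ σ p.2 < σ p.1)).card

/-- inversion number of the window of `|σ|`; its parity is the sign of `Abs σ`. -/
noncomputable def invAbs (n : ℕ) (σ : Equiv.Perm ℤ) : ℕ :=
  (((Finset.Icc (1 : ℤ) (n : ℤ)) ×ˢ (Finset.Icc (1 : ℤ) (n : ℤ))).filter
    (fun p => p.1 < p.2 ∧ |σ p.2| < |σ p.1|)).card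

/-- `σ ∈ L_n = C₂ ≀ A_n`: a signed permutation whose underlying permutation is even. -/
def isL (n : ℕ) (σ : Equiv.Perm ℤ) : Prop := isB n σ ∧ Even (invAbs n σ)

/-- `σ ∈ A_n`: an unsigned even permutation. -/
def isA (n : ℕ) (σ : Equiv.Perm ℤ) : Prop := isS n σ ∧ Even (invStat n σ)

/-- `Neg(σ) = {i ∈ [n] : σ(i) < 0}`. -/
noncomputable def negSet (n : ℕ) (σ : Equiv.Perm ℤ) : Finset ℤ :=
  (Finset.Icc (1 : ℤ) (n : ℤ)).filter (fun i => σ i < 0)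

/-- `σ ∈ D_n`: a signed permutation with an even number of negative window entries. -/
def isD (n : ℕ) (σ : Equiv.Perm ℤ) : Prop := isB n σ ∧ Even (negSet n σ).card

/-- the sum of the elements of `Neg(σ)`. -/
noncomputable def negSum (n : ℕ) (σ : Equiv.Perm ℤ) : ℤ := ∑ i ∈ negSet n σ, i

/-- `del_B(σ)`: the number of non-initial left-to-right minima of the window. -/
noncomputable def delB (n : ℕ) (σ : Equiv.Perm ℤ) : ℕ :=
  ((Finset.Icc (2 : ℤ) (n : ℤ)).filter
    (fun j => ∀ i ∈ Finset.Icc (1 : ℤ) (n : ℤ), i < j → σ j < σ i)).card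

/-- the Coxeter length of `σ ∈ B_n` with respect to `s 0, …, s (n-1)`. -/
noncomputable def ellB (n : ℕ) (σ : Equiv.Perm ℤ) : ℕ :=
  sInf {k | ∃ l : List ℕ, l.length = k ∧ (∀ i ∈ l, i < n) ∧ (l.map s).prod = σ}

/-- the `L`-length `ℓ_L(σ) = inv(σ) - del_B(σ) + Σ Neg(σ⁻¹)`. -/
noncomputable def ellL (n : ℕ) (σ : Equiv.Perm ℤ) : ℤ :=
  (invStat n σ : ℤ) - (delB n σ : ℤ) + negSum n σ⁻¹

/-- the `A`-descent set of `π ∈ L_{n+1}`. -/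
noncomputable def desASet (n : ℕ) (π : Equiv.Perm ℤ) : Finset ℕ :=
  (Finset.Icc 1 (n - 1)).filter (fun i => ellL (n + 1) (π * a i) ≤ ellL (n + 1) π)

/-- the `A`-descent number of `π ∈ L_{n+1}`. -/
noncomputable def desA (n : ℕ) (π : Equiv.Perm ℤ) : ℕ := (desASet n π).card

/-- the `S`-descent set of `σ ∈ B_n`. -/
def desSSet (n : ℕ) (σ : Equiv.Perm ℤ) : Finset ℕ :=
  (Finset.Icc 1 (n - 1)).filter (fun i => σ ((i : ℤ) + 1) < σ (i : ℤ))

/-- `maj_B(σ)`. -/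
def majB (n : ℕ) (σ : Equiv.Perm ℤ) : ℕ := ∑ i ∈ desSSet n σ, i

/-- `rmaj_{B_n}(σ)`. -/
def rmajB (n : ℕ) (σ : Equiv.Perm ℤ) : ℕ := ∑ i ∈ desSSet n σ, (n - i)

/-- `rmaj_{L_{n+1}}(π)`. -/
noncomputable def rmajL (n : ℕ) (π : Equiv.Perm ℤ) : ℕ := ∑ i ∈ desASet n π, (n - i)

/-- `nrmaj_{L_{n+1}}(π) = rmaj_{L_{n+1}}(π) + Σ Neg(π⁻¹)`. -/
noncomputable def nrmajL (n : ℕ) (π : Equiv.Perm ℤ) : ℤ := (rmajL n π : ℤ) + negSum (n + 1) π⁻¹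

/-- `s_j s_{j-1} ⋯ s_{j-k+1}` (k factors). -/
def rS (j k : ℕ) : Equiv.Perm ℤ := ((List.range k).map (fun t => s (j - t))).prod

/-- `R_j^S = {1, s_j, s_j s_{j-1}, …, s_j ⋯ s_1}`. -/
def RS (j : ℕ) : Set (Equiv.Perm ℤ) := {σ | ∃ k ≤ j, σ = rS j k}

/-- the word `s_j s_{j-1} ⋯` of length `k` running down to `s_0` and possibly back up. -/
def wordB (j k : ℕ) : List ℕ :=
  ((List.range (min k (j + 1))).map (fun t => j - t)) ++
    ((List.range (k - (j + 1))).map (fun t => t + 1))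

/-- the `k`-th element of `R_j^B`. -/
def rB (j k : ℕ) : Equiv.Perm ℤ := ((wordB j k).map s).prod

/-- `R_j^B = {1, s_j, …, s_j ⋯ s_1, s_j ⋯ s_1 s_0, s_j ⋯ s_1 s_0 s_1, …, s_j ⋯ s_1 s_0 s_1 ⋯ s_j}`. -/
def RB (j : ℕ) : Set (Equiv.Perm ℤ) := {σ | ∃ k ≤ 2 * j + 1, σ = rB j k}

/-- the `k`-th element of `R_j^A`: `a_j ⋯ a_{j-k+1}` for `k ≤ j`, and `a_j ⋯ a_2 a_1⁻¹` for `k = j+1`. -/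
def rA (j k : ℕ) : Equiv.Perm ℤ :=
  if k ≤ j then ((List.range k).map (fun t => a (j - t))).prod
  else ((List.range (j - 1)).map (fun t => a (j - t))).prod * (a 1)⁻¹

/-- `R_j^A = {1, a_j, a_j a_{j-1}, …, a_j ⋯ a_2 a_1, a_j ⋯ a_2 a_1⁻¹}`. -/
def RA (j : ℕ) : Set (Equiv.Perm ℤ) := {σ | ∃ k ≤ j + 1, σ = rA j k}

/-- `R_j^L`. -/
def RL (j : ℕ) : Set (Equiv.Perm ℤ) :=
  if j = 0 then {1, a 0, a 1 * a 0 * (a 1)⁻¹, a 0 * a 1 * a 0 * (a 1)⁻¹}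
  else RA j ∪ {σ | σ = rA j (j + 1) * a 0 ∨ σ = rA j (j + 1) * a 0 * (a 1)⁻¹ ∨
    ∃ m, 1 ≤ m ∧ m ≤ j ∧
      σ = rA j (j + 1) * a 0 * ((List.range m).map (fun t => a (t + 1))).prod}

theorem _root_.Equiv.Perm.apply_inv_self {α : Type*} (f : Perm α) (x : α) : f (f⁻¹ x) = x :=
  f.apply_symm_apply x

theorem _root_.Equiv.Perm.inv_apply_self {α : Type*} (f : Perm α) (x : α) : f⁻¹ (f x) = x :=
  f.symm_apply_apply x

lemma s_apply {i : ℕ} (hi : 1 ≤ i) (x : ℤ) :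
    s i x = if x = (i:ℤ) then (i:ℤ)+1 else if x = (i:ℤ)+1 then (i:ℤ)
      else if x = -(i:ℤ) then -((i:ℤ)+1) else if x = -((i:ℤ)+1) then -(i:ℤ) else x := by
  have h1 : (1:ℤ) ≤ (i:ℤ) := by exact_mod_cast hi
  simp only [s, if_neg (by omega : i ≠ 0), Equiv.Perm.mul_apply, Equiv.swap_apply_def]
  split_ifs <;> omega

lemma isS_one (n : ℕ) : isS n 1 := by
  refine ⟨⟨fun i => rfl, fun i _ => rfl⟩, fun i h => h⟩

lemma isS_mul {n : ℕ} {σ τ : Perm ℤ} (hσ : isS n σ) (hτ : isS n τ) : isS n (σ * τ) := by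
  obtain ⟨⟨hσ1, hσ2⟩, hσ3⟩ := hσ
  obtain ⟨⟨hτ1, hτ2⟩, hτ3⟩ := hτ
  refine ⟨⟨fun i => ?_, fun i h => ?_⟩, fun i h => ?_⟩
  · simp [Equiv.Perm.mul_apply, hτ1, hσ1]
  · simp only [Equiv.Perm.mul_apply, hτ2 i h]; exact hσ2 i h
  · simp only [Equiv.Perm.mul_apply]; exact hσ3 _ (hτ3 i h)

lemma isS_inv {n : ℕ} {σ : Perm ℤ} (hσ : isS n σ) : isS n σ⁻¹ := by
  obtain ⟨⟨h1, h2⟩, h3⟩ := hσ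
  have key : ∀ i : ℤ, σ⁻¹ (-i) = -σ⁻¹ i := by
    intro i
    have := h1 (σ⁻¹ i)
    rw [Equiv.Perm.apply_inv_self] at this
    rw [← this, Equiv.Perm.inv_apply_self]
  refine ⟨⟨key, fun i h => ?_⟩, fun i h => ?_⟩
  · have := h2 i h
    calc σ⁻¹ i = σ⁻¹ (σ i) := by rw [this]
    _ = i := Equiv.Perm.inv_apply_self σ i
  · by_contra hneg
    push_neg at hneg
    rcases lt_or_eq_of_le hneg with h' | h'
    · have : σ (-(σ⁻¹ i)) = -i := by rw [h1, Equiv.Perm.apply_inv_self]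
      have hpos : 0 < -(σ⁻¹ i) := by omega
      have := h3 _ hpos
      omega
    · have h0 : σ⁻¹ i = 0 := h'.symm ▸ rfl
      have : σ 0 = 0 := by have := h1 0; simp at this; omega
      have : i = 0 := by rw [← h0] at *; rw [h0] at this ⊢; rw [← this, Equiv.Perm.apply_inv_self]
      omega

lemma isS_mono {n N : ℕ} (h : n ≤ N) {σ : Perm ℤ} (hσ : isS n σ) : isS N σ := by
  obtain ⟨⟨h1, h2⟩, h3⟩ := hσ
  have hnN : (n:ℤ) ≤ N := by exact_mod_cast h
  exact ⟨⟨h1, fun i hi => h2 i (lt_of_le_of_lt hnN hi)⟩, h3⟩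

lemma isS_s {i n : ℕ} (hi : 1 ≤ i) (hn : i + 1 ≤ n) : isS n (s i) := by
  have h1 : (1:ℤ) ≤ (i:ℤ) := by exact_mod_cast hi
  have hn' : (i:ℤ) + 1 ≤ (n:ℤ) := by exact_mod_cast hn
  refine ⟨⟨fun x => ?_, fun x hx => ?_⟩, fun x hx => ?_⟩ <;>
    simp only [s_apply hi, lt_abs] at * <;> split_ifs <;> omega

lemma isS_window {n : ℕ} {σ : Perm ℤ} (hσ : isS n σ) {x : ℤ} (h1 : 1 ≤ x) (h2 : x ≤ n) :
    1 ≤ σ x ∧ σ x ≤ n := by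
  obtain ⟨⟨hb1, hb2⟩, hpos⟩ := hσ
  have hp : 0 < σ x := hpos x (by omega)
  refine ⟨by omega, ?_⟩
  by_contra hgt
  push_neg at hgt
  have : σ (σ x) = σ x := hb2 (σ x) (by rw [lt_abs]; omega)
  have : σ x = x := σ.injective this
  omega

lemma isS_fix {n : ℕ} {σ : Perm ℤ} (hσ : isS n σ) {x : ℤ} (h : (n:ℤ) < x) : σ x = x :=
  hσ.1.2 x (by rw [lt_abs]; omega)

lemma invStat_cast (n : ℕ) (σ : Perm ℤ) :
    ((invStat n σ : ZMod 2)) =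
      ∑ p ∈ ((Finset.Icc (1:ℤ) (n:ℤ)) ×ˢ (Finset.Icc (1:ℤ) (n:ℤ))).filter
          (fun p : ℤ × ℤ => p.1 < p.2),
        if σ p.2 < σ p.1 then (1 : ZMod 2) else 0 := by
  rw [invStat, ← Finset.filter_filter, Finset.card_filter]
  push_cast
  rfl

lemma invStat_mul {n : ℕ} {σ τ : Perm ℤ} (hσ : isS n σ) (hτ : isS n τ) :
    ((invStat n (σ * τ) : ZMod 2)) = invStat n σ + invStat n τ := by
  classical
  set P := ((Finset.Icc (1:ℤ) (n:ℤ)) ×ˢ (Finset.Icc (1:ℤ) (n:ℤ))).filter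
      (fun p : ℤ × ℤ => p.1 < p.2) with hP
  have memP : ∀ p : ℤ × ℤ, p ∈ P ↔ (1 ≤ p.1 ∧ p.1 ≤ n ∧ 1 ≤ p.2 ∧ p.2 ≤ n ∧ p.1 < p.2) := by
    intro p
    simp [hP, Finset.mem_filter, Finset.mem_product, Finset.mem_Icc, and_assoc]
  set T : ℤ × ℤ → ℤ × ℤ := fun p => if τ p.1 < τ p.2 then (τ p.1, τ p.2) else (τ p.2, τ p.1)
    with hT
  set T' : ℤ × ℤ → ℤ × ℤ :=
      fun p => if τ⁻¹ p.1 < τ⁻¹ p.2 then (τ⁻¹ p.1, τ⁻¹ p.2) else (τ⁻¹ p.2, τ⁻¹ p.1) with hT'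
  have hτ' := isS_inv hτ
  have key : ∑ p ∈ P, (if σ (T p).2 < σ (T p).1 then (1 : ZMod 2) else 0)
      = ∑ p ∈ P, (if σ p.2 < σ p.1 then (1 : ZMod 2) else 0) := by
    refine Finset.sum_nbij' T T' ?_ ?_ ?_ ?_ ?_
    · intro p hp
      rw [memP] at hp ⊢
      have w1 := isS_window hτ hp.1 hp.2.1
      have w2 := isS_window hτ hp.2.2.1 hp.2.2.2.1
      have hne : τ p.1 ≠ τ p.2 := fun h => by
        have := τ.injective h; omega
      simp only [hT]
      split_ifs with h <;> simp <;> omega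
    · intro p hp
      rw [memP] at hp ⊢
      have w1 := isS_window hτ' hp.1 hp.2.1
      have w2 := isS_window hτ' hp.2.2.1 hp.2.2.2.1
      have hne : τ⁻¹ p.1 ≠ τ⁻¹ p.2 := fun h => by
        have := τ⁻¹.injective h; omega
      simp only [hT']
      split_ifs with h <;> simp [-Equiv.Perm.coe_inv] <;> omega
    · intro p hp
      rw [memP] at hp
      simp only [hT, hT']
      split_ifs with h1 h2 h2 <;>
        simp_all [Equiv.Perm.inv_apply_self] <;> omega
    · intro p hp
      rw [memP] at hp
      simp only [hT, hT']
      split_ifs with h1 h2 h2 <;>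
        simp_all [Equiv.Perm.apply_inv_self] <;> omega
    · intro p hp; rfl
  rw [invStat_cast, invStat_cast, invStat_cast, ← key, add_comm, ← Finset.sum_add_distrib]
  refine Finset.sum_congr rfl ?_
  intro p hp
  rw [memP] at hp
  have hne : τ p.1 ≠ τ p.2 := fun h => by
    have := τ.injective h; omega
  have hne2 : σ (τ p.1) ≠ σ (τ p.2) := fun h => hne (σ.injective h)
  rw [Equiv.Perm.mul_apply, Equiv.Perm.mul_apply]
  rcases lt_or_gt_of_ne hne with h | h
  · have hTp : T p = (τ p.1, τ p.2) := by simp only [hT]; rw [if_pos h]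
    have h1 : (if σ (T p).2 < σ (T p).1 then (1:ZMod 2) else 0)
        = if σ (τ p.2) < σ (τ p.1) then 1 else 0 := by rw [hTp]
    have h2 : (if τ p.2 < τ p.1 then (1:ZMod 2) else 0) = 0 := by rw [if_neg (by omega)]
    rw [h1, h2, zero_add]
  · have hTp : T p = (τ p.2, τ p.1) := by simp only [hT]; rw [if_neg (by omega)]
    have h1 : (if σ (T p).2 < σ (T p).1 then (1:ZMod 2) else 0)
        = if σ (τ p.1) < σ (τ p.2) then 1 else 0 := by rw [hTp]
    have h2 : (if τ p.2 < τ p.1 then (1:ZMod 2) else 0) = 1 := by rw [if_pos h]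
    rw [h1, h2]
    rcases lt_or_gt_of_ne hne2 with h3 | h3
    · rw [if_neg (show ¬ (σ (τ p.2) < σ (τ p.1)) by omega), if_pos h3]; decide
    · rw [if_pos (show σ (τ p.2) < σ (τ p.1) by omega),
        if_neg (show ¬ (σ (τ p.1) < σ (τ p.2)) by omega)]; decide

lemma invStat_one (n : ℕ) : invStat n (1 : Perm ℤ) = 0 := by
  rw [invStat, Finset.card_eq_zero, Finset.filter_eq_empty_iff]
  intro p _
  simp only [Equiv.Perm.one_apply]
  omega

lemma invStat_inv {n : ℕ} {σ : Perm ℤ} (hσ : isS n σ) :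
    ((invStat n σ⁻¹ : ZMod 2)) = invStat n σ := by
  have h := invStat_mul hσ (isS_inv hσ)
  rw [mul_inv_cancel, invStat_one] at h
  have h2 : ((invStat n σ : ZMod 2)) + invStat n σ⁻¹ = 0 := by rw [← h]; norm_num
  rw [eq_neg_of_add_eq_zero_left h2, CharTwo.neg_eq]

lemma invStat_stable {n N : ℕ} (hnN : n ≤ N) {σ : Perm ℤ} (hσ : isS n σ) :
    invStat N σ = invStat n σ := by
  have hc : (n:ℤ) ≤ (N:ℤ) := by exact_mod_cast hnN
  rw [invStat, invStat]
  congr 1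
  apply Finset.ext
  rintro ⟨p1, p2⟩
  simp only [Finset.mem_filter, Finset.mem_product, Finset.mem_Icc]
  constructor
  · rintro ⟨⟨⟨hp1, hp1'⟩, hp2, hp2'⟩, hlt, hinv⟩
    have hb2 : p2 ≤ (n:ℤ) := by
      by_contra hgt
      push_neg at hgt
      have e2 : σ p2 = p2 := isS_fix hσ hgt
      rcases le_or_gt p1 (n:ℤ) with h1 | h1
      · have := (isS_window hσ hp1 h1).2
        omega
      · have e1 : σ p1 = p1 := isS_fix hσ h1
        omega
    exact ⟨⟨⟨hp1, by omega⟩, hp2, hb2⟩, hlt, hinv⟩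
  · rintro ⟨⟨⟨hp1, hp1'⟩, hp2, hp2'⟩, hlt, hinv⟩
    exact ⟨⟨⟨hp1, by omega⟩, hp2, by omega⟩, hlt, hinv⟩

lemma invStat_s {i n : ℕ} (hi : 1 ≤ i) (hn : i + 1 ≤ n) : invStat n (s i) = 1 := by
  have h1 : (1:ℤ) ≤ (i:ℤ) := by exact_mod_cast hi
  have hn' : (i:ℤ) + 1 ≤ (n:ℤ) := by exact_mod_cast hn
  rw [invStat]
  rw [show (((Finset.Icc (1 : ℤ) (n : ℤ)) ×ˢ (Finset.Icc (1 : ℤ) (n : ℤ))).filter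
      (fun p => p.1 < p.2 ∧ s i p.2 < s i p.1)) = {((i:ℤ), (i:ℤ)+1)} from ?_]
  · exact Finset.card_singleton _
  · apply Finset.ext
    rintro ⟨p1, p2⟩
    simp only [Finset.mem_filter, Finset.mem_product, Finset.mem_Icc, Finset.mem_singleton,
      Prod.mk.injEq, s_apply hi]
    constructor
    · rintro ⟨⟨⟨a1, a2⟩, b1, b2⟩, hlt, hinv⟩
      split_ifs at hinv <;> omega
    · rintro ⟨e1, e2⟩
      subst e1; subst e2
      refine ⟨⟨⟨by omega, by omega⟩, by omega, by omega⟩, by omega, ?_⟩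
      split_ifs <;> omega

lemma isS_a {i n : ℕ} (hi : 1 ≤ i) (hn : i + 2 ≤ n) : isS n (a i) := by
  rw [a, if_neg (by omega : i ≠ 0)]
  exact isS_mul (isS_s le_rfl (by omega)) (isS_s (by omega) (by omega))

lemma invStat_a {i n : ℕ} (hi : 1 ≤ i) (hn : i + 2 ≤ n) :
    ((invStat n (a i) : ZMod 2)) = 0 := by
  rw [a, if_neg (by omega : i ≠ 0)]
  rw [invStat_mul (isS_s le_rfl (by omega)) (isS_s (by omega) (by omega)),
    invStat_s le_rfl (by omega), invStat_s (by omega) (by omega)]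
  decide

lemma a_apply {i : ℕ} (hi : 1 ≤ i) : a i ((i:ℤ) + 1) = (i:ℤ) + 2 := by
  have h1 : (1:ℤ) ≤ (i:ℤ) := by exact_mod_cast hi
  rw [a, if_neg (by omega : i ≠ 0)]
  simp only [Equiv.Perm.mul_apply]
  rw [s_apply (by omega : 1 ≤ i + 1)]
  push_cast
  rw [if_pos rfl]
  rw [s_apply le_rfl]
  push_cast
  split_ifs <;> omega

lemma a1_inv_apply : (a 1)⁻¹ (1 : ℤ) = 3 := by
  have h : a 1 (3:ℤ) = 1 := by
    rw [a, if_neg (by omega : (1:ℕ) ≠ 0)]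
    simp only [Equiv.Perm.mul_apply]
    rw [s_apply (by omega : 1 ≤ 2)]
    norm_num
    rw [s_apply le_rfl]
    norm_num
  rw [← h, Equiv.Perm.inv_apply_self]

/-- `isS` together with evenness of the inversion statistic. -/
def Q (n : ℕ) (σ : Perm ℤ) : Prop := isS n σ ∧ ((invStat n σ : ZMod 2)) = 0

lemma Q_one (n : ℕ) : Q n 1 := ⟨isS_one n, by rw [invStat_one]; rfl⟩

lemma Q_mul {n : ℕ} {σ τ : Perm ℤ} (hσ : Q n σ) (hτ : Q n τ) : Q n (σ * τ) :=
  ⟨isS_mul hσ.1 hτ.1, by rw [invStat_mul hσ.1 hτ.1, hσ.2, hτ.2, add_zero]⟩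

lemma Q_inv {n : ℕ} {σ : Perm ℤ} (hσ : Q n σ) : Q n σ⁻¹ :=
  ⟨isS_inv hσ.1, by rw [invStat_inv hσ.1, hσ.2]⟩

lemma Q_a {i n : ℕ} (hi : 1 ≤ i) (hn : i + 2 ≤ n) : Q n (a i) :=
  ⟨isS_a hi hn, invStat_a hi hn⟩

lemma rA_zero (j : ℕ) : rA j 0 = 1 := by
  rw [rA, if_pos (Nat.zero_le j)]
  simp

lemma rA_succ {j k : ℕ} (h : k < j) : rA j (k + 1) = rA j k * a (j - k) := by
  rw [rA, rA, if_pos (by omega : k + 1 ≤ j), if_pos (by omega : k ≤ j),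
    List.range_succ, List.map_append, List.prod_append]
  simp

lemma rA_top {j : ℕ} (hj : 1 ≤ j) : rA j (j + 1) = rA j (j - 1) * (a 1)⁻¹ := by
  rw [rA, rA, if_neg (by omega), if_pos (by omega : j - 1 ≤ j)]

lemma rA_Q_le {j k : ℕ} (hj : 1 ≤ j) (hk : k ≤ j) : Q (j + 2) (rA j k) := by
  induction k with
  | zero => rw [rA_zero]; exact Q_one _
  | succ k ih =>
    rw [rA_succ (by omega : k < j)]
    exact Q_mul (ih (by omega)) (Q_a (by omega) (by omega))

lemma rA_Q {j k : ℕ} (hj : 1 ≤ j) (hk : k ≤ j + 1) : Q (j + 2) (rA j k) := by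
  rcases le_or_gt k j with h | h
  · exact rA_Q_le hj h
  · have hkj : k = j + 1 := by omega
    subst hkj
    rw [rA_top hj]
    exact Q_mul (rA_Q_le hj (by omega)) (Q_inv (Q_a le_rfl (by omega)))

lemma rA_apply_le {j k : ℕ} (hk : k ≤ j) : rA j k ((j:ℤ) + 2 - k) = (j:ℤ) + 2 := by
  induction k with
  | zero => rw [rA_zero]; simp
  | succ k ih =>
    rw [rA_succ (by omega : k < j), Equiv.Perm.mul_apply]
    have hcast : ((j - k : ℕ) : ℤ) = (j : ℤ) - k := by
      rw [Nat.cast_sub (by omega : k ≤ j)]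
    have hx : (j:ℤ) + 2 - (k + 1 : ℕ) = ((j - k : ℕ) : ℤ) + 1 := by push_cast [hcast]; ring
    rw [hx, a_apply (by omega : 1 ≤ j - k), hcast]
    have : (j:ℤ) - k + 2 = (j:ℤ) + 2 - k := by ring
    rw [this]
    exact ih (by omega)

lemma rA_apply {j k : ℕ} (hj : 1 ≤ j) (hk : k ≤ j + 1) :
    rA j k ((j:ℤ) + 2 - k) = (j:ℤ) + 2 := by
  rcases le_or_gt k j with h | h
  · exact rA_apply_le h
  · have hkj : k = j + 1 := by omega
    subst hkj
    rw [rA_top hj, Equiv.Perm.mul_apply]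
    have hx : (j:ℤ) + 2 - (j + 1 : ℕ) = 1 := by push_cast; ring
    rw [hx, a1_inv_apply]
    have h3 : (3:ℤ) = (j:ℤ) + 2 - ((j - 1 : ℕ) : ℤ) := by
      rw [Nat.cast_sub (by omega : 1 ≤ j)]; push_cast; ring
    rw [h3]
    exact rA_apply_le (by omega)

lemma isB_zero {n : ℕ} {σ : Perm ℤ} (hσ : isB n σ) : σ 0 = 0 := by
  have := hσ.1 0
  simp at this
  omega

lemma eq_one_of_window_id {n : ℕ} {σ : Perm ℤ} (hσ : isS n σ)
    (h : ∀ x : ℤ, 1 ≤ x → x ≤ n → σ x = x) : σ = 1 := by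
  have hpos : ∀ x : ℤ, 0 < x → σ x = x := by
    intro x hx
    rcases le_or_gt x (n:ℤ) with h1 | h1
    · exact h x (by omega) h1
    · exact isS_fix hσ h1
  ext x
  simp only [Equiv.Perm.one_apply]
  rcases lt_trichotomy x 0 with hx | hx | hx
  · have := hσ.1.1 (-x)
    rw [neg_neg] at this
    rw [this, hpos (-x) (by omega)]
    ring
  · subst hx; exact isB_zero hσ.1
  · exact hpos x hx

lemma isA_one_eq {v : Perm ℤ} (hv : isA 1 v) : v = 1 := by
  apply eq_one_of_window_id hv.1
  intro x h1 h2
  have := isS_window hv.1 h1 (by exact_mod_cast h2)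
  omega

lemma isA_two_eq {v : Perm ℤ} (hv : isA 2 v) : v = 1 := by
  have w1 := isS_window hv.1 (by omega : (1:ℤ) ≤ 1) (by norm_num)
  have w2 := isS_window hv.1 (by omega : (1:ℤ) ≤ 2) (by norm_num)
  have hne : v 1 ≠ v 2 := fun h => by have := v.injective h; omega
  push_cast at w1 w2
  rcases (by omega : v 1 = 1 ∨ v 1 = 2) with h1 | h1
  · apply eq_one_of_window_id hv.1
    intro x hx1 hx2
    have : x = 1 ∨ x = 2 := by push_cast at hx2; omega
    rcases this with rfl | rfl
    · exact h1
    · omega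
  · exfalso
    have h2 : v 2 = 1 := by omega
    have : invStat 2 v = 1 := by
      rw [invStat]
      rw [show (((Finset.Icc (1 : ℤ) ((2:ℕ) : ℤ)) ×ˢ (Finset.Icc (1 : ℤ) ((2:ℕ) : ℤ))).filter
          (fun p => p.1 < p.2 ∧ v p.2 < v p.1)) = {((1:ℤ), (2:ℤ))} from ?_]
      · exact Finset.card_singleton _
      · apply Finset.ext
        rintro ⟨p1, p2⟩
        simp only [Finset.mem_filter, Finset.mem_product, Finset.mem_Icc, Finset.mem_singleton,
          Prod.mk.injEq]
        push_cast
        constructor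
        · rintro ⟨⟨⟨a1, a2⟩, b1, b2⟩, hlt, _⟩
          omega
        · rintro ⟨e1, e2⟩
          subst e1; subst e2
          refine ⟨⟨⟨by omega, by omega⟩, by omega, by omega⟩, by omega, by omega⟩
    have heven := hv.2
    rw [this] at heven
    exact (Nat.not_even_one) heven

lemma isS_listProd {n : ℕ} : ∀ l : List (Perm ℤ), (∀ σ ∈ l, isS n σ) → isS n l.prod := by
  intro l
  induction l with
  | nil => intro _; simpa using isS_one n
  | cons a l ih =>
    intro h
    rw [List.prod_cons]
    exact isS_mul (h a List.mem_cons_self) (ih fun σ hσ => h σ (List.mem_cons_of_mem a hσ))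

lemma RA_isS {j n : ℕ} {σ : Perm ℤ} (hj : 1 ≤ j) (hn : j + 2 ≤ n) (hσ : σ ∈ RA j) :
    isS n σ := by
  obtain ⟨k, hk, rfl⟩ := hσ
  exact isS_mono hn (rA_Q hj hk).1

lemma ofFn_snoc_prod {m : ℕ} (g : Fin m → Perm ℤ) (r : Perm ℤ) :
    (List.ofFn (Fin.snoc g r : Fin (m+1) → Perm ℤ)).prod = (List.ofFn g).prod * r := by
  rw [List.ofFn_succ']
  simp [Fin.snoc_castSucc, Fin.snoc_last]

lemma aux_main : ∀ m : ℕ, ∀ v : Equiv.Perm ℤ, isA (m + 2) v →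
    ∃! f : Fin m → Equiv.Perm ℤ,
      (∀ j : Fin m, f j ∈ RA (j.1 + 1)) ∧ (List.ofFn f).prod = v := by
  intro m
  induction m with
  | zero =>
    intro v hv
    refine ⟨fun i => i.elim0, ⟨fun j => j.elim0, ?_⟩, ?_⟩
    · simp [List.ofFn_zero, isA_two_eq hv]
    · intro f' _
      funext i
      exact i.elim0
  | succ m ih =>
    intro v hv
    have hvS : isS (m + 3) v := hv.1
    have hvE : ((invStat (m + 3) v : ZMod 2)) = 0 := by
      have h2 := hv.2
      have : invStat (m + 1 + 2) v = invStat (m + 3) v := by norm_num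
      rw [this] at h2
      exact ZMod.natCast_eq_zero_iff_even.mpr h2
    -- the position of the value m+3 in v
    set p : ℤ := v⁻¹ ((m : ℤ) + 3) with hp
    have hpwin' : 1 ≤ p ∧ p ≤ (m : ℤ) + 3 := by
      have h := isS_window (n := m + 3) (isS_inv hvS) (x := (m:ℤ) + 3)
        (by omega) (by push_cast; omega)
      rw [hp]
      push_cast at h
      exact h
    set k : ℕ := ((m : ℤ) + 3 - p).toNat with hk
    have hkcast : (k : ℤ) = (m : ℤ) + 3 - p := by rw [hk]; omega
    have hkle : k ≤ (m + 1) + 1 := by omega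
    set r : Perm ℤ := rA (m + 1) k with hr
    have hrmem : r ∈ RA (m + 1) := ⟨k, hkle, rfl⟩
    have hrQ : Q (m + 3) r := rA_Q (j := m + 1) (by omega) hkle
    have hrp : r p = (m : ℤ) + 3 := by
      have := rA_apply (j := m + 1) (k := k) (by omega) hkle
      have hcast : ((m + 1 : ℕ) : ℤ) + 2 = (m : ℤ) + 3 := by push_cast; ring
      rw [hcast] at this
      rw [hr, show p = (m : ℤ) + 3 - (k : ℤ) by omega]
      exact this
    set w : Perm ℤ := v * r⁻¹ with hw
    have hwinv : w⁻¹ ((m : ℤ) + 3) = (m : ℤ) + 3 := by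
      rw [hw, mul_inv_rev, inv_inv, Equiv.Perm.mul_apply, ← hp, hrp]
    have hw3 : w ((m : ℤ) + 3) = (m : ℤ) + 3 := by
      conv_lhs => rw [← hwinv]
      exact w.apply_inv_self _
    have hwS3 : isS (m + 3) w := isS_mul hvS (isS_inv hrQ.1)
    have hwS : isS (m + 2) w := by
      refine ⟨⟨hwS3.1.1, ?_⟩, hwS3.2⟩
      intro x hx
      rcases lt_or_ge ((m + 3 : ℕ) : ℤ) |x| with h1 | h1
      · exact hwS3.1.2 x h1
      · have hxx : x = (m : ℤ) + 3 ∨ x = -((m : ℤ) + 3) := by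
          rw [lt_abs] at hx
          rw [abs_le] at h1
          push_cast at hx h1 ⊢
          omega
        rcases hxx with rfl | rfl
        · exact hw3
        · rw [hwS3.1.1, hw3]
    have hwA : isA (m + 2) w := by
      refine ⟨hwS, ?_⟩
      rw [← ZMod.natCast_eq_zero_iff_even]
      have hstab : invStat (m + 3) w = invStat (m + 2) w := invStat_stable (by omega) hwS
      rw [← hstab, hw, invStat_mul hvS (isS_inv hrQ.1), hvE, invStat_inv hrQ.1, hrQ.2,
        add_zero]
    obtain ⟨g, ⟨hgmem, hgprod⟩, hguniq⟩ := ih w hwA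
    refine ⟨Fin.snoc g r, ⟨?_, ?_⟩, ?_⟩
    · intro i
      induction i using Fin.lastCases with
      | last => rw [Fin.snoc_last]; exact hrmem
      | cast i => rw [Fin.snoc_castSucc]; exact hgmem i
    · rw [ofFn_snoc_prod, hgprod, hw, inv_mul_cancel_right]
    · rintro f' ⟨hmem', hprod'⟩
      obtain ⟨k', hk', hr'⟩ := hmem' (Fin.last m)
      have hw'S : isS (m + 2) (List.ofFn (Fin.init f')).prod := by
        apply isS_listProd
        intro σ hσ
        rw [List.mem_ofFn] at hσ
        obtain ⟨i, rfl⟩ := hσ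
        have hi := i.isLt
        have hic : ((i.castSucc : Fin (m+1)) : ℕ) = (i : ℕ) := Fin.coe_castSucc i
        exact RA_isS (by omega) (by omega) (hmem' i.castSucc)
      set w' : Perm ℤ := (List.ofFn (Fin.init f')).prod with hw'
      have hsplit : w' * f' (Fin.last m) = v := by
        rw [hw', ← hprod', List.ofFn_succ', List.prod_concat]
        rfl
      have hvinv : v⁻¹ ((m : ℤ) + 3) = (f' (Fin.last m))⁻¹ ((m : ℤ) + 3) := by
        rw [← hsplit, mul_inv_rev, Equiv.Perm.mul_apply]
        congr 1
        have : w'⁻¹ ((m : ℤ) + 3) = (m : ℤ) + 3 := by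
          rw [Equiv.Perm.inv_eq_iff_eq]
          exact (isS_fix hw'S (by push_cast; omega)).symm
        rw [this]
      have hr'p : (f' (Fin.last m))⁻¹ ((m : ℤ) + 3) = (m : ℤ) + 3 - k' := by
        rw [hr']
        rw [Equiv.Perm.inv_eq_iff_eq]
        have := rA_apply (j := m + 1) (k := k') (by omega) (by simpa using hk')
        have hcast : ((m + 1 : ℕ) : ℤ) + 2 = (m : ℤ) + 3 := by push_cast; ring
        rw [hcast] at this
        exact this.symm
      have hkk : k' = k := by
        have : p = (m : ℤ) + 3 - k' := by rw [hp, hvinv, hr'p]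
        omega
      have hreq : f' (Fin.last m) = r := by
        rw [hr', hkk, hr, Fin.val_last]
      have hw'eq : w' = w := by
        rw [hw]
        rw [← hsplit, hreq, mul_inv_cancel_right]
      have hinit : Fin.init f' = g := by
        apply hguniq
        refine ⟨?_, ?_⟩
        · intro i
          have := hmem' i.castSucc
          simpa [Fin.init] using this
        · rw [← hw', hw'eq]
      rw [← hinit, ← hreq]
      exact (Fin.snoc_init_self f').symm

/-- Every `v ∈ A_{n+1}` has a unique presentation `v = v₁ ⋯ v_{n-1}`
with `v_j ∈ R_j^A`. -/
theorem aCanonicalPresentation (n : ℕ) (v : Equiv.Perm ℤ) (hv : isA (n + 1) v) :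
    ∃! f : Fin (n - 1) → Equiv.Perm ℤ,
      (∀ j : Fin (n - 1), f j ∈ RA (j.1 + 1)) ∧ (List.ofFn f).prod = v := by
  cases n with
  | zero =>
    refine ⟨fun i => i.elim0, ⟨fun j => j.elim0, ?_⟩, ?_⟩
    · simp [List.ofFn_zero, isA_one_eq hv]
    · intro f' _
      funext i
      exact i.elim0
  | succ m =>
    cases m with
    | zero =>
      refine ⟨fun i => i.elim0, ⟨fun j => j.elim0, ?_⟩, ?_⟩
      · simp [List.ofFn_zero, isA_two_eq hv]
      · intro f' _
        funext i
        exact i.elim0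
    | succ m =>
      exact aux_main (m + 1) v hv
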